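/- Let D be a finite set of binary strings of length N, and let f_0, f_1, …, f_k : D → E be functions with Gram matrices F_0, F_1, …, F_k. Suppose that for each i ∈ {1,…,k} there are a real C_i ≥ 0 and a feasible solution for γ(F_{i−1} − F_i) whose cost function is bounded above by C_i at every x ∈ D. Then there is a feasible solution for γ(F_0 − F_k) whose cost function is bounded above by ∑_{i=1}^k C_i at every x ∈ D. -/

import Mathlib

open Finset

/-- A feasible solution for the filtered γ₂-norm SDP `γ(A)` on domain `D ⊆ {0,1}^N`,
with cost function `c`. -/
def GammaFeasible {N : ℕ} (D : Finset (Fin N → Bool))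
    (A : (Fin N → Bool) → (Fin N → Bool) → ℝ)
    (c : (Fin N → Bool) → ℝ) : Prop :=
  ∃ (d : ℕ) (u v : (Fin N → Bool) → Fin N → EuclideanSpace ℂ (Fin d)),
    (∀ x ∈ D, ∀ y ∈ D,
      ∑ j ∈ Finset.univ.filter (fun j => x j ≠ y j),
        (inner ℂ (u x j) (v y j) : ℂ) = (A x y : ℂ)) ∧
    (∀ x ∈ D, c x = max (∑ j, ‖u x j‖ ^ 2) (∑ j, ‖v x j‖ ^ 2))

/-- The Gram matrix of a function `f`. -/
def Gram {N : ℕ} {E : Type*} [DecidableEq E] (f : (Fin N → Bool) → E) :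
    (Fin N → Bool) → (Fin N → Bool) → ℝ :=
  fun x y => if f x = f y then 1 else 0

/-- Concatenation of two Euclidean vectors. -/
def glue {d₁ d₂ : ℕ} (a : EuclideanSpace ℂ (Fin d₁)) (a' : EuclideanSpace ℂ (Fin d₂)) :
    EuclideanSpace ℂ (Fin (d₁ + d₂)) :=
  WithLp.toLp 2 (fun i => Fin.addCases (motive := fun _ => ℂ) (fun j => a j) (fun j => a' j) i)

lemma euclid_norm_sq {d : ℕ} (a : EuclideanSpace ℂ (Fin d)) :
    ‖a‖ ^ 2 = ∑ i, ‖a i‖ ^ 2 := by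
  rw [EuclideanSpace.norm_eq]
  rw [Real.sq_sqrt (Finset.sum_nonneg fun i _ => sq_nonneg _)]

lemma glue_inner {d₁ d₂ : ℕ} (a b : EuclideanSpace ℂ (Fin d₁))
    (a' b' : EuclideanSpace ℂ (Fin d₂)) :
    (inner ℂ (glue a a') (glue b b') : ℂ) = inner ℂ a b + inner ℂ a' b' := by
  simp [glue, PiLp.inner_apply, Fin.sum_univ_add]

lemma glue_norm_sq {d₁ d₂ : ℕ} (a : EuclideanSpace ℂ (Fin d₁))
    (a' : EuclideanSpace ℂ (Fin d₂)) :
    ‖glue a a'‖ ^ 2 = ‖a‖ ^ 2 + ‖a'‖ ^ 2 := by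
  simp [glue, euclid_norm_sq, Fin.sum_univ_add]

lemma gamma_add {N : ℕ} (D : Finset (Fin N → Bool))
    (A B : (Fin N → Bool) → (Fin N → Bool) → ℝ)
    (cA cB : (Fin N → Bool) → ℝ)
    (hA : GammaFeasible D A cA) (hB : GammaFeasible D B cB) :
    ∃ c, GammaFeasible D (fun x y => A x y + B x y) c ∧
      ∀ x ∈ D, c x ≤ cA x + cB x := by
  obtain ⟨d₁, u, v, hEq, hCost⟩ := hA
  obtain ⟨d₂, u', v', hEq', hCost'⟩ := hB
  refine ⟨fun x => max (∑ j, ‖glue (u x j) (u' x j)‖ ^ 2)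
      (∑ j, ‖glue (v x j) (v' x j)‖ ^ 2),
    ⟨d₁ + d₂, fun x j => glue (u x j) (u' x j), fun x j => glue (v x j) (v' x j),
      ?_, fun x _ => rfl⟩, ?_⟩
  · intro x hx y hy
    simp only [glue_inner, Finset.sum_add_distrib]
    push_cast
    rw [hEq x hx y hy, hEq' x hx y hy]
  · intro x hx
    rw [hCost x hx, hCost' x hx]
    simp only [glue_norm_sq, Finset.sum_add_distrib]
    exact max_le (add_le_add (le_max_left _ _) (le_max_left _ _))
      (add_le_add (le_max_right _ _) (le_max_right _ _))

lemma gamma_congr {N : ℕ} (D : Finset (Fin N → Bool))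
    (A B : (Fin N → Bool) → (Fin N → Bool) → ℝ)
    (c : (Fin N → Bool) → ℝ)
    (hAB : ∀ x y, A x y = B x y) (hA : GammaFeasible D A c) :
    GammaFeasible D B c := by
  have : A = B := funext fun x => funext fun y => hAB x y
  rwa [this] at hA

theorem gamma_composition_worst_case {N k : ℕ} {E : Type*} [DecidableEq E]
    (D : Finset (Fin N → Bool))
    (f : Fin (k + 1) → (Fin N → Bool) → E)
    (C : Fin k → ℝ) (hC : ∀ i, 0 ≤ C i)
    (h : ∀ i : Fin k, ∃ c : (Fin N → Bool) → ℝ,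
      GammaFeasible D (fun x y => Gram (f i.castSucc) x y - Gram (f i.succ) x y) c ∧
      ∀ x ∈ D, c x ≤ C i) :
    ∃ cc : (Fin N → Bool) → ℝ,
      GammaFeasible D (fun x y => Gram (f 0) x y - Gram (f (Fin.last k)) x y) cc ∧
      ∀ x ∈ D, cc x ≤ ∑ i, C i := by
  induction k with
  | zero =>
    refine ⟨fun _ => 0, ⟨0, fun _ _ => 0, fun _ _ => 0, ?_, ?_⟩, ?_⟩
    · intro x hx y hy
      have : Fin.last 0 = (0 : Fin 1) := rfl
      simp [this]
    · intro x hx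
      simp
    · intro x hx
      simp
  | succ k ih =>
    obtain ⟨cc₁, hFeas₁, hB₁⟩ := ih (fun j => f j.castSucc) (fun i => C i.castSucc)
      (fun i => hC i.castSucc)
      (fun i => by
        obtain ⟨c, hc, hbc⟩ := h i.castSucc
        exact ⟨c, gamma_congr D _ _ c (fun x y => by rw [Fin.succ_castSucc]) hc, hbc⟩)
    obtain ⟨c₂, hFeas₂, hB₂⟩ := h (Fin.last k)
    obtain ⟨cc, hFeas, hB⟩ := gamma_add D _ _ cc₁ c₂ hFeas₁ hFeas₂
    refine ⟨cc, gamma_congr D _ _ cc (fun x y => ?_) hFeas, fun x hx => ?_⟩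
    · have h0 : (Fin.castSucc (0 : Fin (k+1))) = (0 : Fin (k+2)) := rfl
      have hl : (Fin.last k).succ = Fin.last (k+1) := Fin.succ_last k
      rw [h0, hl]
      ring
    · calc cc x ≤ cc₁ x + c₂ x := hB x hx
        _ ≤ (∑ i : Fin k, C i.castSucc) + C (Fin.last k) :=
          add_le_add (hB₁ x hx) (hB₂ x hx)
        _ = ∑ i, C i := (Fin.sum_univ_castSucc C).symm
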